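/- For every integer n ≥ 2, the subgroup B₁(n) of GL₂(ℤ/nℤ) consisting of upper triangular matrices with top-left entry 1 (i.e., matrices [[1,b],[0,d]] with d a unit) has index φ(n)·ψ(n) in GL₂(ℤ/nℤ), where φ is Euler's totient function and ψ is the Dedekind psi function ψ(n) = n·∏_{p∣n}(1+1/p). -/

import Mathlib

/-- The Dedekind psi function, `ψ(n) = n ∏_{p ∣ n} (1 + 1/p)`,
given by the Dirichlet convolution `ψ = μ² ⋆ Id`. -/
def dedekindPsi (n : ℕ) : ℕ := ∑ d ∈ n.divisors, if Squarefree d then n / d else 0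

namespace StmtAux

open ArithmeticFunction

/-- Indicator of squarefree numbers, as an arithmetic function. -/
def sqf : ArithmeticFunction ℕ :=
  ⟨fun d => if Squarefree d then 1 else 0, by simp [not_squarefree_zero]⟩

lemma sqf_apply (d : ℕ) : sqf d = if Squarefree d then 1 else 0 := rfl

lemma sqf_mult : sqf.IsMultiplicative := by
  refine ⟨by simp [sqf_apply], ?_⟩
  intro m n h
  simp only [sqf_apply, Nat.squarefree_mul h]
  by_cases hm : Squarefree m <;> by_cases hn : Squarefree n <;> simp [hm, hn]

/-- Dedekind psi as an arithmetic function. -/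
def psiF : ArithmeticFunction ℕ := sqf * ArithmeticFunction.id

lemma psiF_mult : psiF.IsMultiplicative := sqf_mult.mul isMultiplicative_id

lemma psiF_eq (n : ℕ) : psiF n = dedekindPsi n := by
  rw [psiF, mul_apply, dedekindPsi,
    ← Nat.sum_divisorsAntidiagonal (fun d e => if Squarefree d then e else 0)]
  refine Finset.sum_congr rfl fun i _ => ?_
  simp [sqf_apply, ArithmeticFunction.id_apply, ite_mul]

lemma psiF_prime_pow {p k : ℕ} (hp : p.Prime) (hk : k ≠ 0) :
    psiF (p ^ k) = p ^ k + p ^ (k - 1) := by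
  rw [psiF_eq, dedekindPsi, Nat.sum_divisors_prime_pow hp]
  have hterm : ∀ i ∈ Finset.range (k + 1),
      (if Squarefree (p ^ i) then p ^ k / p ^ i else 0) =
        (if i = 0 then p ^ k else 0) + (if i = 1 then p ^ (k - 1) else 0) := by
    intro i _
    match i with
    | 0 => simp
    | 1 =>
      have hdiv : p ^ k / p ^ 1 = p ^ (k - 1) := Nat.pow_div (by omega) hp.pos
      rw [pow_one] at hdiv
      simp [hp.squarefree, hdiv]
    | (j + 2) =>
      have hns : ¬ Squarefree (p ^ (j + 2)) := by
        intro h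
        exact hp.one_lt.ne' (Nat.isUnit_iff.mp (h p
          (by simpa [sq] using pow_dvd_pow p (show 2 ≤ j + 2 by omega))))
      simp [hns]
  have h0 : 0 < k + 1 := by omega
  have h1 : 1 < k + 1 := by omega
  rw [Finset.sum_congr rfl hterm, Finset.sum_add_distrib,
    Finset.sum_ite_eq' (Finset.range (k + 1)) 0, Finset.sum_ite_eq' (Finset.range (k + 1)) 1]
  simp [Finset.mem_range, h0, h1]

/-- The set of coprime pairs in a commutative ring. -/
abbrev Cop (R : Type*) [CommRing R] : Type _ := {x : R × R // IsCoprime x.1 x.2}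

/-- Transport coprime pairs along a ring isomorphism. -/
def copEquiv {R S : Type*} [CommRing R] [CommRing S] (e : R ≃+* S) : Cop R ≃ Cop S where
  toFun x := ⟨(e x.1.1, e x.1.2), x.2.map (e : R →+* S)⟩
  invFun y := ⟨(e.symm y.1.1, e.symm y.1.2), y.2.map (e.symm : S →+* R)⟩
  left_inv x := by ext <;> simp
  right_inv y := by ext <;> simp

lemma isCoprime_prod {R S : Type*} [CommRing R] [CommRing S] (x y : R × S) :
    IsCoprime x y ↔ IsCoprime x.1 y.1 ∧ IsCoprime x.2 y.2 := by
  constructor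
  · intro h
    exact ⟨h.map (RingHom.fst R S), h.map (RingHom.snd R S)⟩
  · rintro ⟨⟨a, b, hab⟩, ⟨c, d, hcd⟩⟩
    exact ⟨(a, c), (b, d), Prod.ext (by simpa using hab) (by simpa using hcd)⟩

/-- Coprime pairs in a product ring. -/
def copProdEquiv (R S : Type*) [CommRing R] [CommRing S] : Cop (R × S) ≃ Cop R × Cop S where
  toFun x := ⟨⟨(x.1.1.1, x.1.2.1), ((isCoprime_prod _ _).mp x.2).1⟩,
    ⟨(x.1.1.2, x.1.2.2), ((isCoprime_prod _ _).mp x.2).2⟩⟩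
  invFun y := ⟨((y.1.1.1, y.2.1.1), (y.1.1.2, y.2.1.2)),
    (isCoprime_prod _ _).mpr ⟨y.1.2, y.2.2⟩⟩
  left_inv x := rfl
  right_inv y := rfl

/-- The number of coprime pairs mod `n`, as an arithmetic function. -/
noncomputable def cnt : ArithmeticFunction ℕ :=
  ⟨fun n => if n = 0 then 0 else Nat.card (Cop (ZMod n)), by simp⟩

lemma cnt_apply {n : ℕ} (hn : n ≠ 0) : cnt n = Nat.card (Cop (ZMod n)) := if_neg hn

instance : Unique (Cop (ZMod 1)) where
  default := ⟨(0, 0), 0, 0, Subsingleton.elim _ _⟩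
  uniq x := Subtype.ext (Subsingleton.elim _ _)

lemma cnt_mult : cnt.IsMultiplicative := by
  constructor
  · rw [cnt_apply one_ne_zero]
    exact Nat.card_unique
  · intro m n h
    rcases eq_or_ne m 0 with rfl | hm
    · rcases Nat.coprime_zero_left n |>.mp h with rfl; simp
    rcases eq_or_ne n 0 with rfl | hn'
    · rcases Nat.coprime_zero_right m |>.mp h with rfl; simp
    rw [cnt_apply (Nat.mul_ne_zero hm hn'), cnt_apply hm, cnt_apply hn']
    rw [Nat.card_congr ((copEquiv (ZMod.chineseRemainder h)).trans
      (copProdEquiv (ZMod m) (ZMod n))), Nat.card_prod]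


lemma isCoprime_zmod_prime_pow {p k : ℕ} (hp : p.Prime) (hk : k ≠ 0) (a b : ZMod (p ^ k)) :
    IsCoprime a b ↔ IsUnit a ∨ IsUnit b := by
  haveI : NeZero (p ^ k) := ⟨pow_ne_zero _ hp.pos.ne'⟩
  have hpnu : ¬ IsUnit (p : ZMod (p ^ k)) := by
    rw [ZMod.isUnit_iff_coprime]
    intro hc
    exact hp.one_lt.ne' (hc.eq_one_of_dvd (dvd_pow_self p hk))
  have hval : ∀ c : ZMod (p ^ k), ((c.val : ℕ) : ZMod (p ^ k)) = c :=
    fun c => ZMod.natCast_rightInverse c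
  constructor
  · rintro ⟨x, y, hxy⟩
    by_contra hcon
    push_neg at hcon
    obtain ⟨ha, hb⟩ := hcon
    have hdvda : p ∣ a.val := by
      by_contra hd
      exact ha (by
        rw [← hval a, ZMod.isUnit_iff_coprime]
        exact Nat.Coprime.pow_right _ ((Nat.Prime.coprime_iff_not_dvd hp).mpr hd).symm)
    have hdvdb : p ∣ b.val := by
      by_contra hd
      exact hb (by
        rw [← hval b, ZMod.isUnit_iff_coprime]
        exact Nat.Coprime.pow_right _ ((Nat.Prime.coprime_iff_not_dvd hp).mpr hd).symm)
    obtain ⟨t, ht⟩ := hdvda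
    obtain ⟨s, hs⟩ := hdvdb
    have hat : a = (p : ZMod (p ^ k)) * (t : ZMod (p ^ k)) := by
      rw [← hval a, ht]; push_cast; ring
    have hbs : b = (p : ZMod (p ^ k)) * (s : ZMod (p ^ k)) := by
      rw [← hval b, hs]; push_cast; ring
    exact hpnu (IsUnit.of_mul_eq_one (x * t + y * s)
      (by linear_combination hxy - x * hat - y * hbs))
  · rintro (h | h)
    · obtain ⟨u, rfl⟩ := h
      exact ⟨↑u⁻¹, 0, by simp⟩
    · obtain ⟨u, rfl⟩ := h
      exact ⟨0, ↑u⁻¹, by simp⟩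

/-- Units of a monoid are equivalent to the subtype of elements that are units. -/
noncomputable def unitsEquivIsUnit {M : Type*} [Monoid M] : Mˣ ≃ {a : M // IsUnit a} where
  toFun u := ⟨u, u.isUnit⟩
  invFun a := a.2.unit
  left_inv u := Units.ext u.isUnit.unit_spec
  right_inv a := Subtype.ext a.2.unit_spec

lemma card_not_isUnit_zmod_prime_pow {p k : ℕ} (hp : p.Prime) (hk : k ≠ 0) :
    Nat.card {a : ZMod (p ^ k) // ¬ IsUnit a} = p ^ (k - 1) := by
  haveI : NeZero (p ^ k) := ⟨pow_ne_zero _ hp.pos.ne'⟩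
  classical
  rw [Nat.card_eq_fintype_card, Fintype.card_subtype_compl,
    Fintype.card_congr unitsEquivIsUnit.symm, ZMod.card_units_eq_totient, ZMod.card,
    Nat.totient_prime_pow hp (Nat.pos_of_ne_zero hk)]
  have hq : p ^ (k - 1) * p = p ^ k := by
    rw [← pow_succ]; congr 1; omega
  have h2 : p ^ (k - 1) * (p - 1) + p ^ (k - 1) = p ^ (k - 1) * p := by
    obtain ⟨m, hm⟩ : ∃ m, p = m + 1 := ⟨p - 1, by have := hp.pos; omega⟩
    subst hm
    simp [Nat.add_sub_cancel, Nat.mul_succ]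
  omega

lemma card_cop_prime_pow {p k : ℕ} (hp : p.Prime) (hk : k ≠ 0) :
    Nat.card (Cop (ZMod (p ^ k))) = (p ^ k) ^ 2 - (p ^ (k - 1)) ^ 2 := by
  haveI : NeZero (p ^ k) := ⟨pow_ne_zero _ hp.pos.ne'⟩
  classical
  have e1 : Cop (ZMod (p ^ k)) ≃
      {x : ZMod (p ^ k) × ZMod (p ^ k) // IsUnit x.1 ∨ IsUnit x.2} :=
    Equiv.subtypeEquivRight fun x => isCoprime_zmod_prime_pow hp hk x.1 x.2
  have e2 : {x : ZMod (p ^ k) × ZMod (p ^ k) // ¬ (IsUnit x.1 ∨ IsUnit x.2)} ≃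
      {a : ZMod (p ^ k) // ¬ IsUnit a} × {a : ZMod (p ^ k) // ¬ IsUnit a} :=
    (Equiv.subtypeEquivRight fun x => not_or).trans
      (Equiv.subtypeProdEquivProd (p := fun a : ZMod (p ^ k) => ¬ IsUnit a)
        (q := fun a : ZMod (p ^ k) => ¬ IsUnit a))
  set S : Set (ZMod (p ^ k) × ZMod (p ^ k)) := {x | IsUnit x.1 ∨ IsUnit x.2} with hSdef
  have hS := Set.ncard_add_ncard_compl S
  rw [← Nat.card_coe_set_eq, ← Nat.card_coe_set_eq] at hS
  have hcompl : Nat.card ↥(Sᶜ) = p ^ (k - 1) * p ^ (k - 1) := by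
    have e3 : ↥(Sᶜ) ≃ {a : ZMod (p ^ k) // ¬ IsUnit a} × {a : ZMod (p ^ k) // ¬ IsUnit a} :=
      (Equiv.subtypeEquivRight fun x => (Iff.rfl :
        x ∈ Sᶜ ↔ ¬ (IsUnit x.1 ∨ IsUnit x.2))).trans e2
    rw [Nat.card_congr e3, Nat.card_prod, card_not_isUnit_zmod_prime_pow hp hk]
  have hb : Nat.card (Cop (ZMod (p ^ k))) = Nat.card ↥S := by
    rw [Nat.card_congr e1]
    exact Nat.card_congr (Equiv.subtypeEquivRight fun x => Iff.rfl)
  have htot : Nat.card (ZMod (p ^ k) × ZMod (p ^ k)) = p ^ k * p ^ k := by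
    rw [Nat.card_prod, Nat.card_eq_fintype_card, ZMod.card]
  have hp2 : (p ^ k) ^ 2 = p ^ k * p ^ k := pow_two (p ^ k)
  have hp2' : (p ^ (k - 1)) ^ 2 = p ^ (k - 1) * p ^ (k - 1) := pow_two (p ^ (k - 1))
  omega

/-- Euler totient as an arithmetic function. -/
def totF : ArithmeticFunction ℕ := ⟨Nat.totient, Nat.totient_zero⟩

lemma totF_apply (m : ℕ) : totF m = m.totient := rfl

lemma totF_mult : totF.IsMultiplicative := ⟨Nat.totient_one, fun h => Nat.totient_mul h⟩

lemma cnt_eq : cnt = totF.pmul psiF := by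
  rw [ArithmeticFunction.IsMultiplicative.eq_iff_eq_on_prime_powers _ cnt_mult _ (totF_mult.pmul psiF_mult)]
  intro p i hp
  rcases eq_or_ne i 0 with rfl | hi
  · rw [pow_zero, cnt_mult.map_one, (totF_mult.pmul psiF_mult).map_one]
  · rw [cnt_apply (pow_ne_zero _ hp.pos.ne'), card_cop_prime_pow hp hi, pmul_apply,
      psiF_prime_pow hp hi, totF_apply, Nat.totient_prime_pow hp (Nat.pos_of_ne_zero hi),
      Nat.sq_sub_sq]
    have hq : p ^ (i - 1) * p = p ^ i := by rw [← pow_succ]; congr 1; omega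
    have h2 : p ^ (i - 1) * (p - 1) + p ^ (i - 1) = p ^ (i - 1) * p := by
      obtain ⟨m, hm⟩ : ∃ m, p = m + 1 := ⟨p - 1, by have := hp.pos; omega⟩
      subst hm
      simp [Nat.add_sub_cancel, Nat.mul_succ]
    have h3 : p ^ i - p ^ (i - 1) = p ^ (i - 1) * (p - 1) := by omega
    rw [h3, mul_comm]

instance mvAction (n : ℕ) : MulAction (GL (Fin 2) (ZMod n)) (Fin 2 → ZMod n) where
  smul A v := A.val.mulVec v
  one_smul v := by
    show (1 : GL (Fin 2) (ZMod n)).val.mulVec v = v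
    rw [Units.val_one, Matrix.one_mulVec]
  mul_smul A B v := by
    show (A * B).val.mulVec v = A.val.mulVec (B.val.mulVec v)
    rw [Units.val_mul, Matrix.mulVec_mulVec]

set_option synthInstance.maxHeartbeats 1000000 in
lemma smul_def {n : ℕ} (A : GL (Fin 2) (ZMod n)) (v : Fin 2 → ZMod n) :
    A • v = A.val.mulVec v := rfl

end StmtAux

set_option synthInstance.maxHeartbeats 1000000 in
set_option maxHeartbeats 1000000 in
theorem stmt_2 (n : ℕ) (hn : 2 ≤ n)
    (B : Subgroup (GL (Fin 2) (ZMod n)))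
    (hB : ∀ A : GL (Fin 2) (ZMod n),
      A ∈ B ↔ (A : Matrix (Fin 2) (Fin 2) (ZMod n)) 0 0 = 1 ∧
        (A : Matrix (Fin 2) (Fin 2) (ZMod n)) 1 0 = 0) :
    B.index = n.totient * dedekindPsi n := by
  haveI : NeZero n := ⟨by omega⟩
  set v₀ : Fin 2 → ZMod n := ![1, 0] with hv₀
  have hsmul : ∀ A : GL (Fin 2) (ZMod n), A • v₀ = fun i => A.val i 0 := by
    intro A
    funext i
    simp [StmtAux.smul_def, Matrix.mulVec, dotProduct, Fin.sum_univ_two, hv₀]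
    fin_cases i <;> rfl
  have hBstab : B = MulAction.stabilizer (GL (Fin 2) (ZMod n)) v₀ := by
    ext A
    rw [hB, MulAction.mem_stabilizer_iff, hsmul]
    constructor
    · rintro ⟨h1, h2⟩
      funext i
      fin_cases i <;> simp [hv₀, h1, h2]
    · intro h
      constructor
      · simpa [hv₀] using congrFun h 0
      · simpa [hv₀] using congrFun h 1
  have horb : MulAction.orbit (GL (Fin 2) (ZMod n)) v₀ =
      {v : Fin 2 → ZMod n | IsCoprime (v 0) (v 1)} := by
    ext v
    constructor
    · rintro ⟨A, rfl⟩
      simp only [Set.mem_setOf_eq, hsmul]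
      have hdet : IsUnit A.val.det := (Matrix.isUnit_iff_isUnit_det _).mp A.isUnit
      obtain ⟨u, hu⟩ := hdet
      rw [Matrix.det_fin_two] at hu
      have h1 : (↑u⁻¹ : ZMod n) * ↑u = 1 := u.inv_mul
      exact ⟨↑u⁻¹ * A.val 1 1, -(↑u⁻¹ * A.val 0 1),
        by linear_combination h1 - (↑u⁻¹ : ZMod n) * hu⟩
    · rintro ⟨x, y, hxy⟩
      set M : Matrix (Fin 2) (Fin 2) (ZMod n) := !![v 0, -y; v 1, x] with hM
      have hdet : M.det = 1 := by
        rw [hM, Matrix.det_fin_two_of]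
        linear_combination hxy
      have hMu : IsUnit M := (Matrix.isUnit_iff_isUnit_det _).mpr (hdet ▸ isUnit_one)
      obtain ⟨A, hA⟩ := hMu
      refine ⟨A, ?_⟩
      show A • v₀ = v
      rw [hsmul]
      funext i
      fin_cases i <;> simp [hA, hM]
  have hcard : Nat.card ↥{v : Fin 2 → ZMod n | IsCoprime (v 0) (v 1)} = StmtAux.cnt n := by
    rw [StmtAux.cnt_apply (by omega : n ≠ 0)]
    exact Nat.card_congr
      (Equiv.subtypeEquiv (piFinTwoEquiv fun _ => ZMod n) (fun v => Iff.rfl))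
  rw [hBstab, MulAction.index_stabilizer, horb, ← Nat.card_coe_set_eq, hcard,
    StmtAux.cnt_eq, ArithmeticFunction.pmul_apply, StmtAux.totF_apply, StmtAux.psiF_eq]
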